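/- Let V be a nonzero finite-dimensional vector space over 𝕂 and let A, A* : V → V be linear maps. Then the following are equivalent: (i) A, A* is a q-geometric tridiagonal pair on V; (ii) A and A* satisfy the cubic q-Serre relations, neither A nor A* is nilpotent, and the only subspaces W ⊆ V with AW ⊆ W and A*W ⊆ W are 0 and V. -/

import Mathlib

noncomputable section

/-- `[n]_q = (qⁿ − q⁻ⁿ)/(q − q⁻¹)`. -/
def qInt {K : Type*} [Field K] (q : K) (n : ℕ) : K :=
  (q ^ n - q⁻¹ ^ n) / (q - q⁻¹)

/-- `X, Y` satisfy the cubic `q`-Serre relations. -/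
def QSerre {K V : Type*} [Field K] [AddCommGroup V] [Module K V]
    (q : K) (X Y : Module.End K V) : Prop :=
  X ^ 3 * Y - qInt q 3 • (X ^ 2 * Y * X) + qInt q 3 • (X * Y * X ^ 2) - Y * X ^ 3 = 0 ∧
  Y ^ 3 * X - qInt q 3 • (Y ^ 2 * X * Y) + qInt q 3 • (Y * X * Y ^ 2) - X * Y ^ 3 = 0

/-- `θ 0, …, θ d` is an ordering of the eigenvalues of `A` whose corresponding ordering of the
eigenspaces `V_i = V_A(θ i)` is standard: `B V_i ⊆ V_{i−1} + V_i + V_{i+1}` (with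
`V_{−1} = V_{d+1} = 0`). -/
def IsStdOrdering {K V : Type*} [Field K] [AddCommGroup V] [Module K V]
    (A B : Module.End K V) (d : ℕ) (θ : Fin (d + 1) → K) : Prop :=
  Function.Injective θ ∧
  (∀ i, Module.End.HasEigenvalue A (θ i)) ∧
  (∀ μ : K, Module.End.HasEigenvalue A μ → ∃ i, θ i = μ) ∧
  ∀ i : Fin (d + 1),
    Submodule.map B (Module.End.eigenspace A (θ i)) ≤
      ⨆ j : Fin (d + 1), ⨆ _ : ((i : ℕ) : ℤ) - 1 ≤ ((j : ℕ) : ℤ) ∧ ((j : ℕ) : ℤ) ≤ (i : ℕ) + 1,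
        Module.End.eigenspace A (θ j)

/-- `θ 0, …, θ d` is a `q`-string: `θ i = α q^{d−2i}` for some nonzero `α`. -/
def IsQString {K : Type*} [Field K] (q : K) (d : ℕ) (θ : Fin (d + 1) → K) : Prop :=
  ∃ α : K, α ≠ 0 ∧ ∀ i : Fin (d + 1), θ i = α * q ^ ((d : ℤ) - 2 * (i : ℕ))

/-- `A, B` is a tridiagonal pair on `V`. -/
def IsTridiagonalPair {K V : Type*} [Field K] [AddCommGroup V] [Module K V]
    (A B : Module.End K V) : Prop :=
  (⨆ μ : K, Module.End.eigenspace A μ) = ⊤ ∧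
  (⨆ μ : K, Module.End.eigenspace B μ) = ⊤ ∧
  (∃ (d : ℕ) (θ : Fin (d + 1) → K), IsStdOrdering A B d θ) ∧
  (∃ (δ : ℕ) (θ : Fin (δ + 1) → K), IsStdOrdering B A δ θ) ∧
  ∀ W : Submodule K V, Submodule.map A W ≤ W → Submodule.map B W ≤ W → W = ⊥ ∨ W = ⊤

/-- `A, B` is a `q`-geometric tridiagonal pair on `V`. -/
def IsQGeometricTDP {K V : Type*} [Field K] [AddCommGroup V] [Module K V]
    (q : K) (A B : Module.End K V) : Prop :=
  IsTridiagonalPair A B ∧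
  (∃ (d : ℕ) (θ : Fin (d + 1) → K), IsStdOrdering A B d θ ∧ IsQString q d θ) ∧
  (∃ (d : ℕ) (θ : Fin (d + 1) → K), IsStdOrdering B A d θ ∧ IsQString q d θ)


section TDPAux

open Polynomial Module End

variable {K V : Type*} [Field K] [AddCommGroup V] [Module K V]

namespace TDPAux

/-- The cubic polynomial with roots `θ`, `q²θ`, `q⁻²θ`. -/
def cubPoly (q θ : K) : K[X] :=
  (X - C θ) * ((X - C (q ^ 2) * C θ) * (X - C (q ^ 2)⁻¹ * C θ))

lemma cubPoly_expand {q : K} (hq : q ≠ 0) (θ : K) :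
    cubPoly q θ = X ^ 3 - ((C (q ^ 2) + 1 + C (q ^ 2)⁻¹) * C θ) * X ^ 2
      + ((C (q ^ 2) + 1 + C (q ^ 2)⁻¹) * C θ ^ 2) * X - C θ ^ 3 := by
  have hbc : (C (q ^ 2) : K[X]) * C (q ^ 2)⁻¹ = 1 := by
    rw [← map_mul, mul_inv_cancel₀ (pow_ne_zero 2 hq), map_one]
  unfold cubPoly
  linear_combination ((C θ) ^ 2 * X - (C θ) ^ 3) * hbc

lemma aeval_cubPoly {q : K} (hq : q ≠ 0) (θ : K) (A : Module.End K V) :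
    aeval A (cubPoly q θ) = A ^ 3 - ((q ^ 2 + 1 + (q ^ 2)⁻¹) * θ) • A ^ 2
      + ((q ^ 2 + 1 + (q ^ 2)⁻¹) * θ ^ 2) • A - (θ ^ 3) • 1 := by
  rw [cubPoly_expand hq]
  simp only [map_sub, map_add, map_mul, map_pow, map_one, aeval_X, aeval_C,
    Algebra.algebraMap_eq_smul_one, smul_mul_assoc, one_mul, smul_smul, add_mul, add_smul,
    mul_one, _root_.smul_pow, one_pow]

lemma cubPoly_eval {q θ μ : K} :
    (cubPoly q θ).eval μ = (μ - θ) * ((μ - q ^ 2 * θ) * (μ - (q ^ 2)⁻¹ * θ)) := by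
  simp [cubPoly]

lemma qInt_three {q : K} (hq : q ≠ 0) (h2 : q ^ 2 ≠ 1) :
    qInt q 3 = q ^ 2 + 1 + (q ^ 2)⁻¹ := by
  have hd : q - q⁻¹ ≠ 0 := by
    intro h
    apply h2
    have h' := sub_eq_zero.mp h
    field_simp at h'
    linear_combination h'
  have key : q ^ 3 - q⁻¹ ^ 3 = (q ^ 2 + 1 + (q ^ 2)⁻¹) * (q - q⁻¹) := by
    field_simp
    ring
  unfold qInt
  rw [key, mul_div_assoc, div_self hd, mul_one]

lemma pivot_eq {q : K} (hq : q ≠ 0) (h2 : q ^ 2 ≠ 1) {X Y : Module.End K V}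
    {θ : K} {v : V} (hv : v ∈ Module.End.eigenspace X θ) :
    (aeval X (cubPoly q θ)) (Y v)
      = (X ^ 3 * Y - qInt q 3 • (X ^ 2 * Y * X) + qInt q 3 • (X * Y * X ^ 2) - Y * X ^ 3) v := by
  have hs := qInt_three hq h2
  have hXv : X v = θ • v := Module.End.mem_eigenspace_iff.mp hv
  rw [aeval_cubPoly hq, hs]
  simp only [LinearMap.sub_apply, LinearMap.add_apply, LinearMap.smul_apply,
    Module.End.mul_apply, pow_succ, pow_zero, Module.End.one_apply, hXv, map_smul, smul_smul]
  module

lemma pivot {q : K} (hq : q ≠ 0) (h2 : q ^ 2 ≠ 1) {X Y : Module.End K V}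
    (hrel : X ^ 3 * Y - qInt q 3 • (X ^ 2 * Y * X) + qInt q 3 • (X * Y * X ^ 2) - Y * X ^ 3 = 0)
    {θ : K} {v : V} (hv : v ∈ Module.End.eigenspace X θ) :
    (aeval X (cubPoly q θ)) (Y v) = 0 := by
  rw [pivot_eq hq h2 hv, hrel]
  rfl

lemma eig_eq_ker (A : Module.End K V) (μ : K) :
    Module.End.eigenspace A μ
      = LinearMap.ker (Polynomial.aeval A (Polynomial.X - Polynomial.C μ)) := by
  have h : ((Polynomial.aeval A) (Polynomial.X - Polynomial.C μ))
      = A - μ • (1 : Module.End K V) := by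
    simp [algebraMap_end_eq_smul_id]; rfl
  rw [h, Module.End.eigenspace_def]

lemma ker_coprime (A : Module.End K V) {p r : K[X]} (h : IsCoprime p r) (w : V)
    (hw : (Polynomial.aeval A (p * r)) w = 0) :
    w ∈ LinearMap.ker (aeval A p) ⊔ LinearMap.ker (aeval A r) := by
  obtain ⟨u, v, huv⟩ := h
  have hw1 : (aeval A (v * r)) w ∈ LinearMap.ker (aeval A p) := by
    simp only [LinearMap.mem_ker, ← Module.End.mul_apply, ← map_mul]
    have h2 : p * (v * r) = v * (p * r) := by ring
    rw [h2, map_mul, Module.End.mul_apply, hw, map_zero]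
  have hw2 : (aeval A (u * p)) w ∈ LinearMap.ker (aeval A r) := by
    simp only [LinearMap.mem_ker, ← Module.End.mul_apply, ← map_mul]
    have h2 : r * (u * p) = u * (p * r) := by ring
    rw [h2, map_mul, Module.End.mul_apply, hw, map_zero]
  have h3 : w = (aeval A (v * r)) w + (aeval A (u * p)) w := by
    rw [← LinearMap.add_apply, ← map_add, add_comm (v * r), huv, map_one, Module.End.one_apply]
  rw [h3]
  exact Submodule.add_mem_sup hw1 hw2

lemma aeval_apply_mem_eig {A : Module.End K V} {μ : K} {v : V}
    (hv : v ∈ Module.End.eigenspace A μ) (p : K[X]) : (aeval A p) v = p.eval μ • v := by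
  have hpow : ∀ n : ℕ, (A ^ n) v = μ ^ n • v := by
    intro n
    induction n with
    | zero => simp
    | succ k ih =>
        rw [pow_succ, Module.End.mul_apply, Module.End.mem_eigenspace_iff.mp hv, map_smul, ih,
          smul_smul, ← pow_succ']
  induction p using Polynomial.induction_on' with
  | add f g hf hg => simp [hf, hg, add_smul]
  | monomial n a =>
      simp [aeval_monomial, Module.End.mul_apply, algebraMap_end_eq_smul_id, hpow, smul_smul]

lemma mem_triple {q : K} (hq : q ≠ 0) (h2 : q ^ 2 ≠ 1) (h4 : q ^ 4 ≠ 1)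
    {θ : K} (hθ : θ ≠ 0) {A : Module.End K V} {w : V}
    (hw : (aeval A (cubPoly q θ)) w = 0) :
    w ∈ Module.End.eigenspace A θ ⊔
      (Module.End.eigenspace A (q ^ 2 * θ) ⊔ Module.End.eigenspace A ((q ^ 2)⁻¹ * θ)) := by
  have hq2 : (q : K) ^ 2 ≠ 0 := pow_ne_zero 2 hq
  have d1 : θ ≠ q ^ 2 * θ := fun h =>
    h2 ((mul_right_cancel₀ hθ (by rw [one_mul, ← h]) : (1 : K) = q ^ 2)).symm
  have d2 : θ ≠ (q ^ 2)⁻¹ * θ := fun h =>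
    h2 (inv_eq_one.mp ((mul_right_cancel₀ hθ (by rw [one_mul, ← h]) : (1 : K) = (q ^ 2)⁻¹)).symm)
  have d3 : q ^ 2 * θ ≠ (q ^ 2)⁻¹ * θ := by
    intro h
    have h' : q ^ 2 = (q ^ 2)⁻¹ := mul_right_cancel₀ hθ h
    apply h4
    calc q ^ 4 = q ^ 2 * q ^ 2 := by ring
    _ = q ^ 2 * (q ^ 2)⁻¹ := by rw [← h']
    _ = 1 := mul_inv_cancel₀ hq2
  have c12 : IsCoprime (Polynomial.X - C θ) (Polynomial.X - C (q ^ 2 * θ)) :=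
    isCoprime_X_sub_C_of_isUnit_sub (isUnit_iff_ne_zero.mpr (sub_ne_zero_of_ne d1))
  have c13 : IsCoprime (Polynomial.X - C θ) (Polynomial.X - C ((q ^ 2)⁻¹ * θ)) :=
    isCoprime_X_sub_C_of_isUnit_sub (isUnit_iff_ne_zero.mpr (sub_ne_zero_of_ne d2))
  have c23 : IsCoprime (Polynomial.X - C (q ^ 2 * θ)) (Polynomial.X - C ((q ^ 2)⁻¹ * θ)) :=
    isCoprime_X_sub_C_of_isUnit_sub (isUnit_iff_ne_zero.mpr (sub_ne_zero_of_ne d3))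
  have hw' : (aeval A ((Polynomial.X - C θ) *
      ((Polynomial.X - C (q ^ 2 * θ)) * (Polynomial.X - C ((q ^ 2)⁻¹ * θ))))) w = 0 := by
    rw [show (Polynomial.X - C θ) * ((Polynomial.X - C (q ^ 2 * θ)) *
        (Polynomial.X - C ((q ^ 2)⁻¹ * θ))) = cubPoly q θ by rw [cubPoly, map_mul, map_mul]]
    exact hw
  have step1 := ker_coprime A (c12.mul_right c13) w hw'
  have le1 : LinearMap.ker (aeval A (Polynomial.X - C θ)) = Module.End.eigenspace A θ :=
    (eig_eq_ker A θ).symm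
  have le2 : LinearMap.ker (aeval A ((Polynomial.X - C (q ^ 2 * θ)) *
      (Polynomial.X - C ((q ^ 2)⁻¹ * θ)))) ≤
      Module.End.eigenspace A (q ^ 2 * θ) ⊔ Module.End.eigenspace A ((q ^ 2)⁻¹ * θ) := by
    intro x hx
    have hx2 := ker_coprime A c23 x hx
    rwa [← eig_eq_ker A (q ^ 2 * θ), ← eig_eq_ker A ((q ^ 2)⁻¹ * θ)] at hx2
  rw [← le1]
  exact sup_le_sup le_rfl le2 step1

end TDPAux

end TDPAux


section TDPAux2

open Polynomial Module End TDPAux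

variable {K V : Type*} [Field K] [AddCommGroup V] [Module K V]

namespace TDPAux

lemma zpow_eq_one_imp {q : K} (hq : q ≠ 0) (hq1 : ∀ n : ℕ, 0 < n → q ^ n ≠ 1) :
    ∀ n : ℤ, q ^ n = 1 → n = 0 := by
  intro n h
  rcases lt_trichotomy n 0 with hn | hn | hn
  · exfalso
    apply hq1 (-n).toNat (by omega)
    rw [← zpow_natCast, Int.toNat_of_nonneg (by omega), zpow_neg, h, inv_one]
  · exact hn
  · exfalso
    apply hq1 n.toNat (by omega)
    rw [← zpow_natCast, Int.toNat_of_nonneg (by omega)]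
    exact h

lemma map_eig_self (A : Module.End K V) (μ : K) :
    Submodule.map A (Module.End.eigenspace A μ) ≤ Module.End.eigenspace A μ := by
  rintro _ ⟨v, hv, rfl⟩
  rw [Module.End.mem_eigenspace_iff.mp hv]
  exact Submodule.smul_mem _ _ hv

lemma exists_nonzero_eigenvalue [IsAlgClosed K] [FiniteDimensional K V]
    {A : Module.End K V} (hA : ¬ IsNilpotent A) :
    ∃ β : K, β ≠ 0 ∧ Module.End.HasEigenvalue A β := by
  by_contra h
  push_neg at h
  apply hA
  set p := minpoly K A with hp
  have hmonic : p.Monic := minpoly.monic (LinearMap.isIntegral A)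
  have hsplit : p.Splits := IsAlgClosed.splits p
  have hprod := hsplit.eq_prod_roots_of_monic hmonic
  have hroots : ∀ a ∈ p.roots, a = 0 := by
    intro a ha
    by_contra ha0
    exact h a ha0 (Module.End.hasEigenvalue_iff_isRoot.mpr (isRoot_of_mem_roots ha))
  have hpx : p = Polynomial.X ^ Multiset.card p.roots := by
    conv_lhs => rw [hprod]
    have : Multiset.map (fun a => Polynomial.X - Polynomial.C a) p.roots
        = Multiset.map (fun _ => (Polynomial.X : K[X])) p.roots :=
      Multiset.map_congr rfl (fun a ha => by rw [hroots a ha, map_zero, sub_zero])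
    rw [this, Multiset.map_const', Multiset.prod_replicate]
  refine ⟨Multiset.card p.roots, ?_⟩
  have haev : aeval A p = 0 := minpoly.aeval K A
  rw [hpx] at haev
  simpa using haev

lemma eigenvalues_finite [FiniteDimensional K V] (A : Module.End K V) :
    {μ : K | Module.End.HasEigenvalue A μ}.Finite := by
  classical
  apply Set.Finite.subset (minpoly K A).roots.toFinset.finite_toSet
  intro μ hμ
  simp only [Finset.mem_coe, Multiset.mem_toFinset]
  rw [mem_roots (minpoly.ne_zero (LinearMap.isIntegral A))]
  exact Module.End.hasEigenvalue_iff_isRoot.mp hμ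

lemma not_nilpotent_of_string {q : K} (hq : q ≠ 0) {X : Module.End K V} {d : ℕ}
    {θf : Fin (d + 1) → K} (hev : Module.End.HasEigenvalue X (θf 0))
    (hqs : IsQString q d θf) : ¬ IsNilpotent X := by
  intro hn
  obtain ⟨α, hα, hθ⟩ := hqs
  have h1 : IsNilpotent (θf 0) := Module.End.HasEigenvalue.isNilpotent_of_isNilpotent hn hev
  have h2 : θf 0 = 0 := h1.eq_zero
  rw [hθ 0] at h2
  exact (mul_ne_zero hα (zpow_ne_zero _ hq)) h2

/-- Forward direction : the first cubic q-Serre relation holds for a pair with a standard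
q-string ordering. -/
lemma serre_of_std {q : K} (hq : q ≠ 0) (h2 : q ^ 2 ≠ 1) {X Y : Module.End K V} {d : ℕ}
    {θf : Fin (d + 1) → K} (hstd : IsStdOrdering X Y d θf) (hqs : IsQString q d θf)
    (htop : (⨆ μ : K, Module.End.eigenspace X μ) = ⊤) :
    X ^ 3 * Y - qInt q 3 • (X ^ 2 * Y * X) + qInt q 3 • (X * Y * X ^ 2) - Y * X ^ 3 = 0 := by
  obtain ⟨α, hα, hθ⟩ := hqs
  set P := X ^ 3 * Y - qInt q 3 • (X ^ 2 * Y * X) + qInt q 3 • (X * Y * X ^ 2) - Y * X ^ 3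
    with hP
  refine LinearMap.ker_eq_top.mp (top_unique ?_)
  rw [← htop]
  refine iSup_le fun μ => ?_
  by_cases hE : Module.End.eigenspace X μ = ⊥
  · rw [hE]; exact bot_le
  obtain ⟨i, hi⟩ := hstd.2.2.1 μ hE
  subst hi
  intro v hv
  rw [LinearMap.mem_ker, hP, ← pivot_eq hq h2 hv]
  have hYv : Y v ∈ ⨆ j : Fin (d + 1),
      ⨆ _ : ((i : ℕ) : ℤ) - 1 ≤ ((j : ℕ) : ℤ) ∧ ((j : ℕ) : ℤ) ≤ (i : ℕ) + 1,
      Module.End.eigenspace X (θf j) := hstd.2.2.2 i ⟨v, hv, rfl⟩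
  have hker : (⨆ j : Fin (d + 1),
      ⨆ _ : ((i : ℕ) : ℤ) - 1 ≤ ((j : ℕ) : ℤ) ∧ ((j : ℕ) : ℤ) ≤ (i : ℕ) + 1,
      Module.End.eigenspace X (θf j)) ≤ LinearMap.ker (aeval X (cubPoly q (θf i))) := by
    refine iSup_le fun j => iSup_le fun hcond => ?_
    intro w hw
    rw [LinearMap.mem_ker, aeval_apply_mem_eig hw]
    have hzero : (cubPoly q (θf i)).eval (θf j) = 0 := by
      rw [cubPoly_eval]
      have hj3 : (j : ℕ) = (i : ℕ) ∨ (j : ℕ) + 1 = (i : ℕ) ∨ (j : ℕ) = (i : ℕ) + 1 := by omega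
      rcases hj3 with hj | hj | hj
      · have : θf j = θf i := by congr 1; exact Fin.ext hj
        rw [this, sub_self, zero_mul]
      · have : θf j = q ^ 2 * θf i := by
          rw [hθ i, hθ j, ← mul_assoc, mul_comm (q ^ 2) α, mul_assoc, ← zpow_natCast q 2,
            ← zpow_add₀ hq]
          have hexp : ((((2:ℕ):ℤ)) + ((d:ℤ) - 2 * ((i:ℕ):ℤ))) = ((d:ℤ) - 2 * ((j:ℕ):ℤ)) := by
            omega
          rw [hexp]
        rw [this, sub_self, zero_mul, mul_zero]
      · have : θf j = (q ^ 2)⁻¹ * θf i := by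
          rw [hθ i, hθ j, ← mul_assoc, mul_comm (q ^ 2)⁻¹ α, mul_assoc, ← zpow_natCast q 2,
            ← zpow_neg, ← zpow_add₀ hq]
          have hexp : ((-((2:ℕ):ℤ)) + ((d:ℤ) - 2 * ((i:ℕ):ℤ))) = ((d:ℤ) - 2 * ((j:ℕ):ℤ)) := by
            omega
          rw [hexp]
        rw [this, sub_self, mul_zero, mul_zero]
    rw [hzero, zero_smul]
  exact hker hYv

end TDPAux

end TDPAux2


section TDPMain

open Polynomial Module End TDPAux

variable {K V : Type*} [Field K] [AddCommGroup V] [Module K V]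

namespace TDPAux

lemma mainStruct [IsAlgClosed K] [FiniteDimensional K V]
    {q : K} (hq : q ≠ 0) (hq1 : ∀ n : ℕ, 0 < n → q ^ n ≠ 1)
    {X Y : Module.End K V}
    (hrel : X ^ 3 * Y - qInt q 3 • (X ^ 2 * Y * X) + qInt q 3 • (X * Y * X ^ 2) - Y * X ^ 3 = 0)
    (hX : ¬ IsNilpotent X)
    (hirr : ∀ W : Submodule K V, Submodule.map X W ≤ W → Submodule.map Y W ≤ W →
      W = ⊥ ∨ W = ⊤) :
    (⨆ μ : K, Module.End.eigenspace X μ) = ⊤ ∧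
      ∃ (d : ℕ) (θ : Fin (d + 1) → K), IsStdOrdering X Y d θ ∧ IsQString q d θ := by
  have h2 : q ^ 2 ≠ 1 := hq1 2 (by norm_num)
  have h4 : q ^ 4 ≠ 1 := hq1 4 (by norm_num)
  have hz := zpow_eq_one_imp hq hq1
  obtain ⟨β, hβ0, hβev⟩ := exists_nonzero_eigenvalue hX
  set e : ℤ → K := fun k => β * q ^ (2 * k) with he
  have he0 : ∀ k, e k ≠ 0 := fun k => mul_ne_zero hβ0 (zpow_ne_zero _ hq)
  have heinj : Function.Injective e := by
    intro k k' h
    have h1 : q ^ (2 * k) = q ^ (2 * k') := mul_left_cancel₀ hβ0 h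
    have h3 : q ^ (2 * k - 2 * k') = 1 := by
      rw [zpow_sub₀ hq, h1, div_self (zpow_ne_zero _ hq)]
    have := hz _ h3
    omega
  have he1 : ∀ k, q ^ 2 * e k = e (k + 1) := by
    intro k
    rw [he]
    simp only
    rw [show (2 * (k + 1) : ℤ) = 2 * k + ((2 : ℕ) : ℤ) by omega, zpow_add₀ hq, zpow_natCast]
    ring
  have he2 : ∀ k, (q ^ 2)⁻¹ * e k = e (k - 1) := by
    intro k
    rw [he]
    simp only
    rw [show (2 * (k - 1) : ℤ) = 2 * k + (-((2 : ℕ) : ℤ)) by omega, zpow_add₀ hq, zpow_neg,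
      zpow_natCast]
    ring
  have key : ∀ θ : K, θ ≠ 0 → Submodule.map Y (Module.End.eigenspace X θ) ≤
      Module.End.eigenspace X θ ⊔ (Module.End.eigenspace X (q ^ 2 * θ)
        ⊔ Module.End.eigenspace X ((q ^ 2)⁻¹ * θ)) := by
    rintro θ hθ _ ⟨v, hv, rfl⟩
    exact mem_triple hq h2 h4 hθ (pivot hq h2 hrel hv)
  have inv : ∀ pr : ℤ → Prop,
      (∀ k, pr k → (pr (k + 1) ∨ Module.End.eigenspace X (e (k + 1)) = ⊥)) →
      (∀ k, pr k → (pr (k - 1) ∨ Module.End.eigenspace X (e (k - 1)) = ⊥)) →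
      (∃ k, pr k ∧ Module.End.HasEigenvalue X (e k)) →
      (⨆ k : ℤ, ⨆ _ : pr k, Module.End.eigenspace X (e k)) = ⊤ := by
    rintro pr hup hdn ⟨k0, hk0, hev⟩
    set W := ⨆ k : ℤ, ⨆ _ : pr k, Module.End.eigenspace X (e k) with hW
    have hle : ∀ k, pr k → Module.End.eigenspace X (e k) ≤ W := fun k hk =>
      le_iSup_of_le k (le_iSup_of_le hk le_rfl)
    have hXW : Submodule.map X W ≤ W := by
      rw [hW, Submodule.map_iSup]
      refine iSup_le fun k => ?_
      rw [Submodule.map_iSup]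
      exact iSup_le fun hk => (map_eig_self X (e k)).trans (hle k hk)
    have hYW : Submodule.map Y W ≤ W := by
      rw [hW, Submodule.map_iSup]
      refine iSup_le fun k => ?_
      rw [Submodule.map_iSup]
      refine iSup_le fun hk => ?_
      refine (key (e k) (he0 k)).trans (sup_le (hle k hk) (sup_le ?_ ?_))
      · rw [he1 k]
        rcases hup k hk with h | h
        · exact hle _ h
        · rw [h]; exact bot_le
      · rw [he2 k]
        rcases hdn k hk with h | h
        · exact hle _ h
        · rw [h]; exact bot_le
    rcases hirr W hXW hYW with h | h
    · exact absurd (le_bot_iff.mp (h ▸ hle k0 hk0)) hev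
    · exact h
  have htopc : (⨆ k : ℤ, ⨆ _ : True, Module.End.eigenspace X (e k)) = ⊤ := by
    refine inv (fun _ => True) (fun k _ => Or.inl trivial) (fun k _ => Or.inl trivial) ?_
    exact ⟨0, trivial, by simpa [he] using hβev⟩
  have htop : (⨆ μ : K, Module.End.eigenspace X μ) = ⊤ := by
    refine top_unique ?_
    rw [← htopc]
    exact iSup_le fun k => iSup_le fun _ => le_iSup (fun μ => Module.End.eigenspace X μ) (e k)
  have hclass : ∀ μ : K, Module.End.HasEigenvalue X μ → ∃ k : ℤ, μ = e k := by
    intro μ hμ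
    by_contra h
    push_neg at h
    have hd := iSupIndep_def.mp (Module.End.eigenspaces_iSupIndep X) μ
    have hle' : (⨆ k : ℤ, ⨆ _ : True, Module.End.eigenspace X (e k)) ≤
        ⨆ (ν : K) (_ : ν ≠ μ), Module.End.eigenspace X ν := by
      refine iSup_le fun k => iSup_le fun _ => ?_
      exact le_iSup_of_le (e k) (le_iSup_of_le (Ne.symm (h k)) le_rfl)
    exact hμ (hd.eq_bot_of_le (le_trans le_top (htopc ▸ hle')))
  have hTfin : {k : ℤ | Module.End.HasEigenvalue X (e k)}.Finite := by
    have hfin := eigenvalues_finite X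
    have hpre : {k : ℤ | Module.End.HasEigenvalue X (e k)}
        = e ⁻¹' {μ | Module.End.HasEigenvalue X μ} := rfl
    rw [hpre]
    exact hfin.preimage heinj.injOn
  set F : Finset ℤ := hTfin.toFinset with hF
  have hmemF : ∀ k : ℤ, k ∈ F ↔ Module.End.HasEigenvalue X (e k) := by
    intro k
    rw [hF, Set.Finite.mem_toFinset]
    rfl
  have h0F : (0 : ℤ) ∈ F := (hmemF 0).mpr (by simpa [he] using hβev)
  have hFne : F.Nonempty := ⟨0, h0F⟩
  set m := F.min' hFne with hm
  set M := F.max' hFne with hM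
  have hmF : m ∈ F := F.min'_mem hFne
  have hMF : M ∈ F := F.max'_mem hFne
  have hmM : m ≤ M := F.min'_le M hMF
  have hcont : ∀ k : ℤ, m ≤ k → k ≤ M → k ∈ F := by
    intro k hmk hkM
    by_contra hkF
    have hkne : Module.End.eigenspace X (e k) = ⊥ := by
      rw [← not_ne_iff]
      exact fun hh => hkF ((hmemF k).mpr hh)
    have hkm : m < k := lt_of_le_of_ne hmk fun hh => hkF (hh ▸ hmF)
    have hkM' : k < M := lt_of_le_of_ne hkM fun hh => hkF (hh ▸ hMF)
    have hWk : (⨆ j : ℤ, ⨆ _ : j < k, Module.End.eigenspace X (e j)) = ⊤ := by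
      refine inv (fun j => j < k) ?_ (fun j hj => Or.inl (by omega)) ⟨m, hkm, (hmemF m).mp hmF⟩
      intro j hj
      rcases eq_or_lt_of_le (by omega : j + 1 ≤ k) with h | h
      · right; rw [h]; exact hkne
      · left; exact h
    have hd := iSupIndep_def.mp (Module.End.eigenspaces_iSupIndep X) (e M)
    have hle' : (⨆ j : ℤ, ⨆ _ : j < k, Module.End.eigenspace X (e j)) ≤
        ⨆ (ν : K) (_ : ν ≠ e M), Module.End.eigenspace X ν := by
      refine iSup_le fun j => iSup_le fun hj => ?_
      refine le_iSup_of_le (e j) (le_iSup_of_le (fun hh => ?_) le_rfl)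
      have := heinj hh
      omega
    exact ((hmemF M).mp hMF) (hd.eq_bot_of_le (le_trans le_top (hWk ▸ hle')))
  obtain ⟨dd, hdd⟩ : ∃ dd : ℕ, (dd : ℤ) = M - m := ⟨(M - m).toNat, by omega⟩
  refine ⟨htop, dd, fun i => e (M - ((i : ℕ) : ℤ)), ⟨?_, ?_, ?_, ?_⟩, ?_⟩
  · -- injective
    intro i j h
    have := heinj h
    have hij : ((i : ℕ) : ℤ) = ((j : ℕ) : ℤ) := by omega
    exact Fin.ext (by omega)
  · -- eigenvalues
    intro i
    have hi := i.isLt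
    exact (hmemF _).mp (hcont (M - ((i : ℕ) : ℤ)) (by omega) (by omega))
  · -- completeness
    intro μ hμ
    obtain ⟨k, rfl⟩ := hclass μ hμ
    have hkF : k ∈ F := (hmemF k).mpr hμ
    have h1 : m ≤ k := F.min'_le k hkF
    have h2' : k ≤ M := F.le_max' k hkF
    refine ⟨⟨(M - k).toNat, by omega⟩, ?_⟩
    show e (M - (((M - k).toNat : ℕ) : ℤ)) = e k
    congr 1
    omega
  · -- tridiagonal
    intro i
    have hi := i.isLt
    refine (key (e (M - ((i : ℕ) : ℤ))) (he0 _)).trans (sup_le ?_ (sup_le ?_ ?_))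
    · exact le_iSup_of_le i (le_iSup_of_le ⟨by omega, by omega⟩ le_rfl)
    · rw [he1]
      by_cases hi0 : (i : ℕ) = 0
      · have hnot : M - ((i : ℕ) : ℤ) + 1 ∉ F := by
          intro hh
          have := F.le_max' _ hh
          omega
        have hbot : Module.End.eigenspace X (e (M - ((i : ℕ) : ℤ) + 1)) = ⊥ := by
          rw [← not_ne_iff]
          exact fun hh => hnot ((hmemF _).mpr hh)
        rw [hbot]
        exact bot_le
      · have hθj : e (M - ((i : ℕ) : ℤ) + 1) = e (M - ((((i : ℕ) - 1 : ℕ)) : ℤ)) := by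
          congr 1
          omega
        rw [hθj]
        refine le_iSup_of_le ⟨(i : ℕ) - 1, by omega⟩ (le_iSup_of_le ⟨?_, ?_⟩ le_rfl)
        · show ((i : ℕ) : ℤ) - 1 ≤ ((((i : ℕ) - 1 : ℕ) : ℕ) : ℤ)
          omega
        · show ((((i : ℕ) - 1 : ℕ) : ℕ) : ℤ) ≤ ((i : ℕ) : ℤ) + 1
          omega
    · rw [he2]
      by_cases hid : (i : ℕ) = dd
      · have hnot : M - ((i : ℕ) : ℤ) - 1 ∉ F := by
          intro hh
          have := F.min'_le _ hh
          omega
        have hbot : Module.End.eigenspace X (e (M - ((i : ℕ) : ℤ) - 1)) = ⊥ := by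
          rw [← not_ne_iff]
          exact fun hh => hnot ((hmemF _).mpr hh)
        rw [hbot]
        exact bot_le
      · have hθj : e (M - ((i : ℕ) : ℤ) - 1) = e (M - ((((i : ℕ) + 1 : ℕ)) : ℤ)) := by
          congr 1
          omega
        rw [hθj]
        refine le_iSup_of_le ⟨(i : ℕ) + 1, by omega⟩ (le_iSup_of_le ⟨?_, ?_⟩ le_rfl)
        · show ((i : ℕ) : ℤ) - 1 ≤ ((((i : ℕ) + 1 : ℕ) : ℕ) : ℤ)
          omega
        · show ((((i : ℕ) + 1 : ℕ) : ℕ) : ℤ) ≤ ((i : ℕ) : ℤ) + 1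
          omega
  · -- q-string
    refine ⟨β * q ^ (M + m), mul_ne_zero hβ0 (zpow_ne_zero _ hq), fun i => ?_⟩
    show e (M - ((i : ℕ) : ℤ)) = β * q ^ (M + m) * q ^ ((dd : ℤ) - 2 * ((i : ℕ) : ℤ))
    rw [he]
    simp only
    rw [mul_assoc, ← zpow_add₀ hq,
      show (2 * (M - ((i : ℕ) : ℤ))) = M + m + ((dd : ℤ) - 2 * ((i : ℕ) : ℤ)) from by omega]

end TDPAux

end TDPMain

/-- Theorem 2.7: `A, A*` is a `q`-geometric tridiagonal pair on `V` if and only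
if `A, A*` satisfy the cubic `q`-Serre relations, neither is nilpotent, and the pair acts
irreducibly on `V`. -/
theorem statement1 {K : Type*} [Field K] [IsAlgClosed K] [CharZero K]
    (q : K) (hq : q ≠ 0) (hq1 : ∀ n : ℕ, 0 < n → q ^ n ≠ 1)
    {V : Type*} [AddCommGroup V] [Module K V] [FiniteDimensional K V] [Nontrivial V]
    (A B : Module.End K V) :
    IsQGeometricTDP q A B ↔
      QSerre q A B ∧ ¬ IsNilpotent A ∧ ¬ IsNilpotent B ∧
        ∀ W : Submodule K V, Submodule.map A W ≤ W → Submodule.map B W ≤ W →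
          W = ⊥ ∨ W = ⊤ := by
  have h2 : q ^ 2 ≠ 1 := hq1 2 (by norm_num)
  constructor
  · rintro ⟨⟨htopA, htopB, -, -, hirr⟩, ⟨dA, θA, hstdA, hqsA⟩, ⟨dB, θB, hstdB, hqsB⟩⟩
    refine ⟨⟨TDPAux.serre_of_std hq h2 hstdA hqsA htopA,
      TDPAux.serre_of_std hq h2 hstdB hqsB htopB⟩, ?_, ?_, hirr⟩
    · exact TDPAux.not_nilpotent_of_string hq (hstdA.2.1 0) hqsA
    · exact TDPAux.not_nilpotent_of_string hq (hstdB.2.1 0) hqsB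
  · rintro ⟨⟨hrel1, hrel2⟩, hA, hB, hirr⟩
    obtain ⟨htopA, dA, θA, hstdA, hqsA⟩ := TDPAux.mainStruct hq hq1 hrel1 hA hirr
    obtain ⟨htopB, dB, θB, hstdB, hqsB⟩ :=
      TDPAux.mainStruct hq hq1 hrel2 hB (fun W hw1 hw2 => hirr W hw2 hw1)
    exact ⟨⟨htopA, htopB, ⟨dA, θA, hstdA⟩, ⟨dB, θB, hstdB⟩, hirr⟩, ⟨dA, θA, hstdA, hqsA⟩,
      ⟨dB, θB, hstdB, hqsB⟩⟩
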